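/- Let x* be an extreme point of {x ∈ ℝ^n : 0 ≤ x ≤ d, A x ≤ b} with A a k×n matrix, and let c ∈ ℝ^n be nonnegative with c_max = max_i c_i. Then c · ⌊x*⌋ ≥ c · x* − k · c_max, where ⌊x*⌋ denotes the componentwise floor. -/

import Mathlib

/-- Rounding down an extreme point of the knapsack LP loses at most `k * cmax`. -/
theorem floor_extremePoint_cost (n k : ℕ)
    (A : Matrix (Fin k) (Fin n) ℝ) (b : Fin k → ℝ) (d : Fin n → ℤ)
    (c : Fin n → ℝ) (cmax : ℝ)
    (hA : ∀ i j, 0 ≤ A i j) (hc : ∀ i, 0 ≤ c i)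
    (hcmax : IsGreatest (Set.range c) cmax)
    (x : Fin n → ℝ)
    (hx : x ∈ Set.extremePoints ℝ
      {y : Fin n → ℝ | 0 ≤ y ∧ (∀ i, y i ≤ (d i : ℝ)) ∧ A.mulVec y ≤ b}) :
    ∑ i, c i * (⌊x i⌋ : ℝ) ≥ (∑ i, c i * x i) - k * cmax := by
  classical
  obtain ⟨hxmem, hxext⟩ := hx
  obtain ⟨hx0, hxd, hxA⟩ := hxmem
  set S : Finset (Fin n) := Finset.univ.filter (fun i => x i ≠ (⌊x i⌋ : ℝ)) with hSdef
  have hSstrict : ∀ i ∈ S, 0 < x i ∧ x i < (d i : ℝ) := by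
    intro i hi
    have hne : x i ≠ (⌊x i⌋ : ℝ) := by
      simpa [hSdef] using hi
    have hfl : (⌊x i⌋ : ℝ) < x i := lt_of_le_of_ne (Int.floor_le _) (Ne.symm hne)
    have h0 : (0 : ℝ) ≤ (⌊x i⌋ : ℝ) := by
      exact_mod_cast Int.floor_nonneg.mpr (hx0 i)
    constructor
    · linarith
    · rcases lt_or_eq_of_le (hxd i) with h | h
      · exact h
      · exfalso
        apply hne
        rw [h, Int.floor_intCast]
  -- key claim: at most k fractional coordinates
  have hcard : S.card ≤ k := by
    by_contra hlt
    push_neg at hlt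
    let ext : (↥S → ℝ) →ₗ[ℝ] (Fin n → ℝ) :=
      { toFun := fun u i => if h : i ∈ S then u ⟨i, h⟩ else 0
        map_add' := by intro u v; funext i; by_cases h : i ∈ S <;> simp [h]
        map_smul' := by intro r u; funext i; by_cases h : i ∈ S <;> simp [h] }
    let f : (↥S → ℝ) →ₗ[ℝ] (Fin k → ℝ) := A.mulVecLin.comp ext
    have hninj : ¬ Function.Injective f := by
      intro hinj
      have hle := LinearMap.finrank_le_finrank_of_injective hinj
      rw [Module.finrank_pi, Module.finrank_pi, Fintype.card_coe, Fintype.card_fin] at hle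
      omega
    rw [Function.not_injective_iff] at hninj
    obtain ⟨u1, u2, hfeq, hune⟩ := hninj
    set u : ↥S → ℝ := u1 - u2 with hu
    have hfu : f u = 0 := by rw [hu, map_sub, hfeq, sub_self]
    set v : Fin n → ℝ := ext u with hv
    have hvS : ∀ i, i ∉ S → v i = 0 := by
      intro i hi
      simp [hv, ext, hi]
    have hAv : A.mulVec v = 0 := hfu
    have hvne : v ≠ 0 := by
      intro h0
      apply hune
      have : u = 0 := by
        funext j
        have : v (j : Fin n) = 0 := by rw [h0]; rfl
        simpa [hv, ext, j.2] using this
      rw [hu] at this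
      exact sub_eq_zero.mp this
    obtain ⟨i0, hi0⟩ : ∃ i, v i ≠ 0 := Function.ne_iff.mp hvne
    have hi0S : i0 ∈ S := by
      by_contra h
      exact hi0 (hvS i0 h)
    have hne : S.Nonempty := ⟨i0, hi0S⟩
    set δ : ℝ := S.inf' hne (fun i => min (x i) ((d i : ℝ) - x i)) with hδdef
    have hδpos : 0 < δ := by
      rw [hδdef, Finset.lt_inf'_iff]
      intro i hi
      obtain ⟨h1, h2⟩ := hSstrict i hi
      exact lt_min h1 (by linarith)
    set M : ℝ := S.sup' hne (fun i => |v i|) with hMdef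
    have hMle : ∀ i, |v i| ≤ M := by
      intro i
      by_cases h : i ∈ S
      · exact Finset.le_sup' (fun i => |v i|) h
      · rw [hvS i h]
        simp only [abs_zero]
        exact le_trans (abs_nonneg (v i0)) (Finset.le_sup' (fun i => |v i|) hi0S)
    have hM0 : 0 ≤ M := le_trans (abs_nonneg (v i0)) (hMle i0)
    set ε : ℝ := δ / (M + 1) with hεdef
    have hεpos : 0 < ε := div_pos hδpos (by linarith)
    have hkey : ∀ (t : ℝ) i, |t| ≤ ε → |t * v i| < δ := by
      intro t i ht
      calc |t * v i| = |t| * |v i| := abs_mul _ _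
        _ ≤ ε * M := by
            apply mul_le_mul ht (hMle i) (abs_nonneg _) (le_of_lt hεpos)
        _ < ε * (M + 1) := by nlinarith
        _ = δ := by rw [hεdef]; field_simp
    have hmem : ∀ t : ℝ, |t| ≤ ε →
        (x + t • v) ∈ {y : Fin n → ℝ | 0 ≤ y ∧ (∀ i, y i ≤ (d i : ℝ)) ∧ A.mulVec y ≤ b} := by
      intro t ht
      refine ⟨?_, ?_, ?_⟩
      · intro i
        simp only [Pi.zero_apply, Pi.add_apply, Pi.smul_apply, smul_eq_mul]
        by_cases h : i ∈ S
        · have h1 := hkey t i ht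
          have h2 : δ ≤ min (x i) ((d i : ℝ) - x i) := Finset.inf'_le _ h
          have h3 : -(t * v i) ≤ |t * v i| := neg_le_abs _
          have h4 : δ ≤ x i := le_trans h2 (min_le_left _ _)
          linarith
        · rw [hvS i h]
          simpa using hx0 i
      · intro i
        by_cases h : i ∈ S
        · have h1 := hkey t i ht
          have h2 : δ ≤ min (x i) ((d i : ℝ) - x i) := Finset.inf'_le _ h
          have h3 : t * v i ≤ |t * v i| := le_abs_self _
          have h4 : δ ≤ (d i : ℝ) - x i := le_trans h2 (min_le_right _ _)
          simp only [Pi.add_apply, Pi.smul_apply, smul_eq_mul]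
          linarith
        · simp [hvS i h, hxd i]
      · have : A.mulVec (x + t • v) = A.mulVec x := by
          rw [Matrix.mulVec_add, Matrix.mulVec_smul, hAv]
          simp
        rw [this]
        exact hxA
    have hmem1 := hmem ε (by rw [abs_of_pos hεpos])
    have hmem2 := hmem (-ε) (by rw [abs_neg, abs_of_pos hεpos])
    have hseg : x ∈ openSegment ℝ (x + ε • v) (x + (-ε) • v) := by
      refine ⟨1/2, 1/2, by norm_num, by norm_num, by norm_num, ?_⟩
      module
    have h1 := hxext hmem1 hmem2 hseg
    have : ε • v = 0 := by
      have := congrArg (fun y => y - x) h1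
      simpa [add_sub_cancel_left] using this
    rcases smul_eq_zero.mp this with h | h
    · exact absurd h (ne_of_gt hεpos)
    · exact hvne h
  -- now the estimate
  obtain ⟨j0, hj0⟩ := hcmax.1
  have hcmax0 : 0 ≤ cmax := hj0 ▸ hc j0
  have hsum : (∑ i, c i * x i) - ∑ i, c i * (⌊x i⌋ : ℝ)
      = ∑ i ∈ S, c i * (x i - (⌊x i⌋ : ℝ)) := by
    rw [← Finset.sum_sub_distrib]
    rw [Finset.sum_subset (Finset.subset_univ S)]
    · apply Finset.sum_congr rfl
      intro i _
      ring
    · intro i _ hi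
      have : x i = (⌊x i⌋ : ℝ) := by
        by_contra h
        exact hi (by simp [hSdef, h])
      rw [← this]
      ring
  have hbound : ∑ i ∈ S, c i * (x i - (⌊x i⌋ : ℝ)) ≤ S.card * cmax := by
    calc ∑ i ∈ S, c i * (x i - (⌊x i⌋ : ℝ)) ≤ ∑ i ∈ S, cmax := by
          apply Finset.sum_le_sum
          intro i _
          have h1 : c i ≤ cmax := hcmax.2 ⟨i, rfl⟩
          have h2 : x i - (⌊x i⌋ : ℝ) < 1 := by
            have := Int.sub_one_lt_floor (x i)
            linarith
          have h3 : 0 ≤ x i - (⌊x i⌋ : ℝ) := by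
            have := Int.floor_le (x i)
            linarith
          calc c i * (x i - (⌊x i⌋ : ℝ)) ≤ cmax * 1 :=
                mul_le_mul h1 (le_of_lt h2) h3 hcmax0
            _ = cmax := mul_one _
      _ = S.card * cmax := by rw [Finset.sum_const, nsmul_eq_mul]
  have hk : (S.card : ℝ) * cmax ≤ k * cmax := by
    apply mul_le_mul_of_nonneg_right _ hcmax0
    exact_mod_cast hcard
  linarith
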